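/- Let M = (S, A, AP, L, I) be an interval Markov decision process. For all states s, t ∈ S: s ∼∀ t if and only if L(s) = L(t) and H(s, ∼∀) = H(t, ∼∀), where H(s, R) is the convex hull of the union over a ∈ A of the lifted polytopes P(s, a, R). -/

import Mathlib

open scoped Classical
open MeasureTheory

structure IMDP (S A AP : Type) [Fintype S] [Fintype A] : Type where
  L : S → Set AP
  Il : S → A → S → ℝ
  Iu : S → A → S → ℝ
  Il_nonneg : ∀ s a s', 0 ≤ Il s a s'
  Il_le_Iu : ∀ s a s', Il s a s' ≤ Iu s a s'
  Iu_le_one : ∀ s a s', Iu s a s' ≤ 1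
  feasible_nonempty : ∀ s a, ∃ μ : S → ℝ,
    (∀ s', 0 ≤ μ s') ∧ (∑ s', μ s') = 1 ∧
      ∀ s', μ s' ∈ Set.Icc (Il s a s') (Iu s a s')

def IsDist {X : Type} [Fintype X] (μ : X → ℝ) : Prop :=
  (∀ x, 0 ≤ μ x) ∧ (∑ x, μ x) = 1

def Feasible {S A AP : Type} [Fintype S] [Fintype A] (M : IMDP S A AP)
    (s : S) (a : A) (μ : S → ℝ) : Prop :=
  IsDist μ ∧ ∀ s', μ s' ∈ Set.Icc (M.Il s a s') (M.Iu s a s')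

noncomputable def classMass {S : Type} [Fintype S] (R : S → S → Prop)
    (μ : S → ℝ) (c : S) : ℝ :=
  ∑ s', if R c s' then μ s' else 0

def StepTo {S A AP : Type} [Fintype S] [Fintype A] (M : IMDP S A AP)
    (s : S) (μ : S → ℝ) : Prop :=
  μ ∈ convexHull ℝ (⋃ a : A, {ν : S → ℝ | Feasible M s a ν})

def IsForallBisim {S A AP : Type} [Fintype S] [Fintype A] (M : IMDP S A AP)
    (R : S → S → Prop) : Prop :=
  Equivalence R ∧ ∀ s t : S, R s t → M.L s = M.L t ∧
    ∀ μ : S → ℝ, StepTo M s μ →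
      ∃ ν : S → ℝ, StepTo M t ν ∧ ∀ c : S, classMass R μ c = classMass R ν c

def SimForall {S A AP : Type} [Fintype S] [Fintype A] (M : IMDP S A AP)
    (s t : S) : Prop :=
  ∃ R : S → S → Prop, IsForallBisim M R ∧ R s t

def ClassDist {S : Type} [Fintype S] (R : S → S → Prop) (ν : S → ℝ) : Prop :=
  (∀ s, 0 ≤ ν s) ∧ (∀ s t : S, R s t → ν s = ν t) ∧
  (∑ s, ν s / ((Finset.univ.filter fun x => R s x).card : ℝ)) = 1

def PolyP {S A AP : Type} [Fintype S] [Fintype A] (M : IMDP S A AP)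
    (s : S) (a : A) (R : S → S → Prop) : Set (S → ℝ) :=
  {ν | ClassDist R ν ∧
    ∀ c : S, ν c ∈ Set.Icc (classMass R (M.Il s a) c) (classMass R (M.Iu s a) c)}

def PolyH {S A AP : Type} [Fintype S] [Fintype A] (M : IMDP S A AP)
    (s : S) (R : S → S → Prop) : Set (S → ℝ) :=
  convexHull ℝ (⋃ a : A, PolyP M s a R)

section Aux

variable {S : Type} [Fintype S]

/-- The fundamental double-counting identity: summing a class-constant-weighted
quantity by dividing by class sizes recovers the plain sum. -/
lemma key_identity (R : S → S → Prop) (hR : Equivalence R) (p : S → Prop)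
    (hp : ∀ a b, R a b → (p a ↔ p b)) (μ : S → ℝ) :
    (∑ s, if p s then classMass R μ s / ((Finset.univ.filter fun x => R s x).card : ℝ) else 0)
      = ∑ s, if p s then μ s else 0 := by
  have hcard : ∀ a b : S, R a b →
      (Finset.univ.filter fun x => R a x) = (Finset.univ.filter fun x => R b x) := by
    intro a b h
    ext x
    simp only [Finset.mem_filter, Finset.mem_univ, true_and]
    exact ⟨fun hx => hR.trans (hR.symm h) hx, fun hx => hR.trans h hx⟩
  calc (∑ s, if p s then classMass R μ s / ((Finset.univ.filter fun x => R s x).card : ℝ) else 0)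
      = ∑ s, ∑ s', if p s ∧ R s s' then μ s' / ((Finset.univ.filter fun x => R s x).card : ℝ) else 0 := by
        apply Finset.sum_congr rfl; intro s _
        by_cases hps : p s
        · simp only [hps, true_and, if_true, classMass, Finset.sum_div]
          apply Finset.sum_congr rfl; intro s' _
          split <;> simp
        · simp [hps]
    _ = ∑ s', ∑ s, if p s ∧ R s s' then μ s' / ((Finset.univ.filter fun x => R s x).card : ℝ) else 0 :=
        Finset.sum_comm
    _ = ∑ s', if p s' then μ s' else 0 := by
        apply Finset.sum_congr rfl; intro s' _
        have h1 : ∀ s, (if p s ∧ R s s' then μ s' / ((Finset.univ.filter fun x => R s x).card : ℝ) else 0)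
            = if R s s' then (if p s' then μ s' / ((Finset.univ.filter fun x => R s' x).card : ℝ) else 0) else 0 := by
          intro s
          by_cases hRs : R s s'
          · have hiff := hp s s' hRs
            by_cases hps' : p s'
            · simp [hRs, hps', hiff.mpr hps', hcard s s' hRs]
            · have hns : ¬ p s := fun h => hps' (hiff.mp h)
              simp [hRs, hps', hns]
          · simp [hRs]
        rw [Finset.sum_congr rfl (fun s _ => h1 s)]
        by_cases hps' : p s'
        · simp only [hps', if_true]
          rw [← Finset.sum_filter, Finset.sum_const, nsmul_eq_mul]
          have hset : (Finset.univ.filter fun s => R s s') = (Finset.univ.filter fun x => R s' x) := by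
            ext x; simp only [Finset.mem_filter, Finset.mem_univ, true_and]
            exact ⟨fun h => hR.symm h, fun h => hR.symm h⟩
          rw [hset]
          have hpos : (0:ℝ) < ((Finset.univ.filter fun x => R s' x).card : ℝ) := by
            have hmem : s' ∈ Finset.univ.filter fun x => R s' x := by
              simp [hR.refl s']
            exact_mod_cast Finset.card_pos.mpr ⟨s', hmem⟩
          rw [mul_comm, div_mul_cancel₀ _ hpos.ne']
        · simp [hps']

lemma sum_classMass_div (R : S → S → Prop) (hR : Equivalence R) (μ : S → ℝ) :
    (∑ s, classMass R μ s / ((Finset.univ.filter fun x => R s x).card : ℝ)) = ∑ s, μ s := by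
  have h := key_identity R hR (fun _ => True) (fun _ _ _ => Iff.rfl) μ
  simpa using h

lemma classMass_const (R : S → S → Prop) (hR : Equivalence R) (μ : S → ℝ)
    {a b : S} (h : R a b) : classMass R μ a = classMass R μ b := by
  unfold classMass
  apply Finset.sum_congr rfl; intro s _
  have hiff : R a s ↔ R b s := ⟨fun h' => hR.trans (hR.symm h) h', fun h' => hR.trans h h'⟩
  exact if_congr hiff rfl rfl

lemma classMass_coarsen {R R' : S → S → Prop} (hR : Equivalence R) (hR' : Equivalence R')
    (hsub : ∀ a b, R a b → R' a b) {μ ν : S → ℝ}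
    (h : ∀ c, classMass R μ c = classMass R ν c) :
    ∀ c, classMass R' μ c = classMass R' ν c := by
  intro c
  have hp : ∀ a b, R a b → (R' c a ↔ R' c b) := fun a b hab =>
    ⟨fun h' => hR'.trans h' (hsub _ _ hab), fun h' => hR'.trans h' (hR'.symm (hsub _ _ hab))⟩
  have h1 := key_identity R hR (fun x => R' c x) hp μ
  have h2 := key_identity R hR (fun x => R' c x) hp ν
  unfold classMass
  rw [← h1, ← h2]
  apply Finset.sum_congr rfl; intro s _
  rw [h s]

lemma classMass_mono {R : S → S → Prop} {f g : S → ℝ} (h : ∀ s, f s ≤ g s) (c : S) :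
    classMass R f c ≤ classMass R g c := by
  unfold classMass
  exact Finset.sum_le_sum fun s _ => by split_ifs; exacts [h s, le_rfl]

lemma classMass_nonneg {R : S → S → Prop} {f : S → ℝ} (h : ∀ s, 0 ≤ f s) (c : S) :
    0 ≤ classMass R f c := by
  unfold classMass
  exact Finset.sum_nonneg fun s _ => by split_ifs; exacts [h s, le_rfl]

/-- `classMass` as a linear map. -/
noncomputable def cmLin (R : S → S → Prop) : (S → ℝ) →ₗ[ℝ] (S → ℝ) where
  toFun μ := classMass R μ
  map_add' μ ν := by
    funext c
    simp only [classMass, Pi.add_apply]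
    rw [← Finset.sum_add_distrib]
    apply Finset.sum_congr rfl; intro s _
    split <;> simp
  map_smul' r μ := by
    funext c
    simp only [classMass, Pi.smul_apply, smul_eq_mul, RingHom.id_apply, Pi.mul_apply,
      Finset.mul_sum]
    apply Finset.sum_congr rfl; intro s _
    split <;> simp

variable {A AP : Type} [Fintype A]

/-- The hard lifting lemma: every member of `PolyP` is realized as the class-mass
vector of a feasible distribution. -/
lemma lift_exists (M : IMDP S A AP) (t : S) (a : A)
    {R : S → S → Prop} (hR : Equivalence R) {ν : S → ℝ} (hν : ν ∈ PolyP M t a R) :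
    ∃ μ, Feasible M t a μ ∧ ∀ c, classMass R μ c = ν c := by
  obtain ⟨⟨hν0, hνconst, hνsum⟩, hνIcc⟩ := hν
  set l : S → ℝ := M.Il t a with hl
  set u : S → ℝ := M.Iu t a with hu
  set L0 : S → ℝ := classMass R l with hL0
  set U0 : S → ℝ := classMass R u with hU0
  have hlu : ∀ s, l s ≤ u s := fun s => M.Il_le_Iu t a s
  have hl0 : ∀ s, 0 ≤ l s := fun s => M.Il_nonneg t a s
  have hLU : ∀ s, L0 s ≤ U0 s := fun s => classMass_mono hlu s
  set θ : S → ℝ := fun s => if U0 s = L0 s then 0 else (ν s - L0 s) / (U0 s - L0 s) with hθ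
  have hθ0 : ∀ s, 0 ≤ θ s := by
    intro s
    rw [hθ]
    by_cases h : U0 s = L0 s
    · simp [h]
    · simp only [h, if_false]
      have hlt : L0 s < U0 s := lt_of_le_of_ne (hLU s) (Ne.symm h)
      exact div_nonneg (by linarith [(hνIcc s).1]) (by linarith)
  have hθ1 : ∀ s, θ s ≤ 1 := by
    intro s
    rw [hθ]
    by_cases h : U0 s = L0 s
    · simp [h]
    · simp only [h, if_false]
      have hlt : L0 s < U0 s := lt_of_le_of_ne (hLU s) (Ne.symm h)
      rw [div_le_one (by linarith)]
      linarith [(hνIcc s).2]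
  have hθconst : ∀ c s, R c s → θ c = θ s := by
    intro c s h
    rw [hθ]
    simp only
    rw [hL0, hU0, classMass_const R hR l h, classMass_const R hR u h, hνconst c s h]
  set μ : S → ℝ := fun s => l s + θ s * (u s - l s) with hμdef
  have hμIcc : ∀ s, μ s ∈ Set.Icc (l s) (u s) := by
    intro s
    constructor
    · rw [hμdef]
      simp only
      nlinarith [hθ0 s, hlu s]
    · rw [hμdef]
      simp only
      nlinarith [hθ1 s, hθ0 s, hlu s]
  have hcm : ∀ c, classMass R μ c = ν c := by
    intro c
    have step1 : classMass R μ c = L0 c + θ c * (U0 c - L0 c) := by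
      unfold classMass
      have hterm : ∀ s, (if R c s then μ s else 0)
          = (if R c s then l s else 0)
            + θ c * ((if R c s then u s else 0) - (if R c s then l s else 0)) := by
        intro s
        by_cases h : R c s
        · simp only [h, if_true, hμdef]
          rw [hθconst c s h]
        · simp [h]
      rw [Finset.sum_congr rfl fun s _ => hterm s, Finset.sum_add_distrib, ← Finset.mul_sum,
        Finset.sum_sub_distrib]
      rw [hL0, hU0]
      rfl
    rw [step1]
    by_cases h : U0 c = L0 c
    · have h1 := (hνIcc c).1
      have h2 := (hνIcc c).2
      rw [hθ]
      simp only [h, if_true]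
      rw [hL0] at *
      rw [hU0] at h h2
      -- ν c = L0 c
      have : ν c = classMass R l c := le_antisymm (h ▸ h2) h1
      simp [this]
    · rw [hθ]
      simp only [h, if_false]
      have hne : U0 c - L0 c ≠ 0 := sub_ne_zero.mpr h
      field_simp
      ring
  refine ⟨μ, ⟨⟨?_, ?_⟩, ?_⟩, hcm⟩
  · intro s
    exact le_trans (hl0 s) (hμIcc s).1
  · -- total mass one
    have h1 : (∑ s, classMass R μ s / ((Finset.univ.filter fun x => R s x).card : ℝ)) = ∑ s, μ s :=
      sum_classMass_div R hR μ
    have h2 : (∑ s, classMass R μ s / ((Finset.univ.filter fun x => R s x).card : ℝ))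
        = ∑ s, ν s / ((Finset.univ.filter fun x => R s x).card : ℝ) := by
      apply Finset.sum_congr rfl; intro s _
      rw [hcm s]
    rw [← h1, h2, hνsum]
  · intro s'
    exact hμIcc s'

lemma feasible_classMass_mem_PolyP (M : IMDP S A AP) (s : S) (a : A)
    {R : S → S → Prop} (hR : Equivalence R) {μ : S → ℝ} (hμ : Feasible M s a μ) :
    classMass R μ ∈ PolyP M s a R := by
  obtain ⟨⟨h0, h1⟩, hIcc⟩ := hμ
  refine ⟨⟨fun c => classMass_nonneg h0 c, fun a' b h => classMass_const R hR μ h, ?_⟩,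
    fun c => ⟨classMass_mono (fun s' => (hIcc s').1) c, classMass_mono (fun s' => (hIcc s').2) c⟩⟩
  rw [sum_classMass_div R hR μ, h1]

lemma stepTo_mem_polyH (M : IMDP S A AP) (s : S)
    {R : S → S → Prop} (hR : Equivalence R) {μ : S → ℝ} (h : StepTo M s μ) :
    classMass R μ ∈ PolyH M s R := by
  have h1 : classMass R μ ∈
      (cmLin R) '' (convexHull ℝ (⋃ a : A, {ν : S → ℝ | Feasible M s a ν})) := ⟨μ, h, rfl⟩
  rw [(cmLin R).image_convexHull] at h1
  refine convexHull_mono ?_ h1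
  rintro x ⟨y, hy, rfl⟩
  rw [Set.mem_iUnion] at hy
  obtain ⟨a, hy⟩ := hy
  exact Set.mem_iUnion.2 ⟨a, feasible_classMass_mem_PolyP M s a hR hy⟩

lemma polyH_lift (M : IMDP S A AP) (t : S)
    {R : S → S → Prop} (hR : Equivalence R) {ν : S → ℝ} (h : ν ∈ PolyH M t R) :
    ∃ μ, StepTo M t μ ∧ classMass R μ = ν := by
  have hsub : (⋃ a : A, PolyP M t a R) ⊆ (cmLin R) '' (⋃ a : A, {ρ : S → ℝ | Feasible M t a ρ}) := by
    intro x hx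
    rw [Set.mem_iUnion] at hx
    obtain ⟨a, hx⟩ := hx
    obtain ⟨μ, hμ, hcm⟩ := lift_exists M t a hR hx
    exact ⟨μ, Set.mem_iUnion.2 ⟨a, hμ⟩, funext hcm⟩
  have h2 := convexHull_mono hsub h
  rw [← (cmLin R).image_convexHull] at h2
  obtain ⟨μ, hμ, hcm⟩ := h2
  exact ⟨μ, hμ, hcm⟩

/- ### `SimForall` is the largest bisimulation -/

lemma eq_bisim (M : IMDP S A AP) : IsForallBisim M (Eq : S → S → Prop) := by
  refine ⟨eq_equivalence, fun s t h => ?_⟩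
  subst h
  exact ⟨rfl, fun μ hμ => ⟨μ, hμ, fun _ => rfl⟩⟩

lemma simForall_refl (M : IMDP S A AP) (s : S) : SimForall M s s :=
  ⟨Eq, eq_bisim M, rfl⟩

lemma simForall_symm (M : IMDP S A AP) {s t : S} (h : SimForall M s t) : SimForall M t s := by
  obtain ⟨R, hb, hst⟩ := h
  exact ⟨R, hb, hb.1.symm hst⟩

lemma simForall_trans (M : IMDP S A AP) {s u t : S}
    (h1 : SimForall M s u) (h2 : SimForall M u t) : SimForall M s t := by
  obtain ⟨R1, hb1, hsu⟩ := h1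
  obtain ⟨R2, hb2, hut⟩ := h2
  set r : S → S → Prop := fun a b => R1 a b ∨ R2 a b with hr
  set R : S → S → Prop := Relation.EqvGen r with hRdef
  have hRe : Equivalence R := Relation.EqvGen.is_equivalence r
  have oneside : ∀ (R' : S → S → Prop), IsForallBisim M R' → (∀ x y, R' x y → R x y) →
      ∀ a b, R' a b → M.L a = M.L b ∧ ∀ μ, StepTo M a μ →
        ∃ ν, StepTo M b ν ∧ ∀ c, classMass R μ c = classMass R ν c := by
    intro R' hb hsub a b hab
    obtain ⟨hL, hstep⟩ := hb.2 a b hab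
    refine ⟨hL, fun μ hμ => ?_⟩
    obtain ⟨ν, hν, hcm⟩ := hstep μ hμ
    exact ⟨ν, hν, classMass_coarsen hb.1 hRe hsub hcm⟩
  have hsub1 : ∀ x y, R1 x y → R x y := fun x y h => Relation.EqvGen.rel x y (Or.inl h)
  have hsub2 : ∀ x y, R2 x y → R x y := fun x y h => Relation.EqvGen.rel x y (Or.inr h)
  have key : ∀ a b, R a b →
      (M.L a = M.L b ∧ ∀ μ, StepTo M a μ → ∃ ν, StepTo M b ν ∧
        ∀ c, classMass R μ c = classMass R ν c)
      ∧ (M.L b = M.L a ∧ ∀ μ, StepTo M b μ → ∃ ν, StepTo M a ν ∧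
        ∀ c, classMass R μ c = classMass R ν c) := by
    intro a b hab
    induction hab with
    | rel x y h =>
      rcases h with h | h
      · exact ⟨oneside R1 hb1 hsub1 x y h, oneside R1 hb1 hsub1 y x (hb1.1.symm h)⟩
      · exact ⟨oneside R2 hb2 hsub2 x y h, oneside R2 hb2 hsub2 y x (hb2.1.symm h)⟩
    | refl x =>
      exact ⟨⟨rfl, fun μ h => ⟨μ, h, fun _ => rfl⟩⟩, ⟨rfl, fun μ h => ⟨μ, h, fun _ => rfl⟩⟩⟩
    | symm x y h ih => exact ⟨ih.2, ih.1⟩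
    | trans x y z hxy hyz ih1 ih2 =>
      constructor
      · refine ⟨ih1.1.1.trans ih2.1.1, fun μ hμ => ?_⟩
        obtain ⟨ν, hν, hcm⟩ := ih1.1.2 μ hμ
        obtain ⟨ρ, hρ, hcm'⟩ := ih2.1.2 ν hν
        exact ⟨ρ, hρ, fun c => (hcm c).trans (hcm' c)⟩
      · refine ⟨ih2.2.1.trans ih1.2.1, fun μ hμ => ?_⟩
        obtain ⟨ν, hν, hcm⟩ := ih2.2.2 μ hμ
        obtain ⟨ρ, hρ, hcm'⟩ := ih1.2.2 ν hν
        exact ⟨ρ, hρ, fun c => (hcm c).trans (hcm' c)⟩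
  refine ⟨R, ⟨hRe, fun a b hab => (key a b hab).1⟩, ?_⟩
  exact hRe.trans (hsub1 s u hsu) (hsub2 u t hut)

lemma simForall_equiv (M : IMDP S A AP) : Equivalence (SimForall M) :=
  ⟨simForall_refl M, fun h => simForall_symm M h, fun h1 h2 => simForall_trans M h1 h2⟩

lemma simForall_bisim (M : IMDP S A AP) : IsForallBisim M (SimForall M) := by
  refine ⟨simForall_equiv M, fun s t h => ?_⟩
  obtain ⟨R, hb, hst⟩ := h
  obtain ⟨hL, hstep⟩ := hb.2 s t hst
  refine ⟨hL, fun μ hμ => ?_⟩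
  obtain ⟨ν, hν, hcm⟩ := hstep μ hμ
  exact ⟨ν, hν, classMass_coarsen hb.1 (simForall_equiv M) (fun a b h => ⟨R, hb, h⟩) hcm⟩

lemma simForall_forward (M : IMDP S A AP) {s t : S} (h : SimForall M s t) :
    M.L s = M.L t ∧ PolyH M s (SimForall M) = PolyH M t (SimForall M) := by
  have hE := simForall_equiv M
  have hB := simForall_bisim M
  refine ⟨(hB.2 s t h).1, ?_⟩
  have main : ∀ u v : S, SimForall M u v →
      PolyH M u (SimForall M) ⊆ PolyH M v (SimForall M) := by
    intro u v huv
    rw [PolyH]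
    apply convexHull_min ?_ (convex_convexHull ℝ _)
    intro ν hν
    rw [Set.mem_iUnion] at hν
    obtain ⟨a, hν⟩ := hν
    obtain ⟨μ, hμfe, hcm⟩ := lift_exists M u a hE hν
    have hstep : StepTo M u μ := subset_convexHull ℝ _ (Set.mem_iUnion.2 ⟨a, hμfe⟩)
    obtain ⟨ν', hν', hcm'⟩ := (hB.2 u v huv).2 μ hstep
    have hmem := stepTo_mem_polyH M v hE hν'
    have heq : classMass (SimForall M) ν' = ν := by
      funext c
      rw [← hcm' c, hcm c]
    rwa [heq] at hmem
  exact Set.Subset.antisymm (main s t h) (main t s (hE.symm h))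

end Aux

theorem stmt6 {S A AP : Type} [Fintype S] [Fintype A] (M : IMDP S A AP) (s t : S) :
    SimForall M s t ↔
      (M.L s = M.L t ∧ PolyH M s (SimForall M) = PolyH M t (SimForall M)) := by
  constructor
  · exact fun h => simForall_forward M h
  · rintro ⟨hL, hH⟩
    have hE := simForall_equiv M
    set R' : S → S → Prop := fun u v =>
      M.L u = M.L v ∧ PolyH M u (SimForall M) = PolyH M v (SimForall M) with hR'def
    have hR'e : Equivalence R' :=
      ⟨fun x => ⟨rfl, rfl⟩, fun h => ⟨h.1.symm, h.2.symm⟩,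
        fun h1 h2 => ⟨h1.1.trans h2.1, h1.2.trans h2.2⟩⟩
    have hsub : ∀ a b, SimForall M a b → R' a b := fun a b h => simForall_forward M h
    refine ⟨R', ⟨hR'e, ?_⟩, ⟨hL, hH⟩⟩
    rintro u v ⟨hLuv, hHuv⟩
    refine ⟨hLuv, fun μ hμ => ?_⟩
    have h1 : classMass (SimForall M) μ ∈ PolyH M u (SimForall M) :=
      stepTo_mem_polyH M u hE hμ
    rw [hHuv] at h1
    obtain ⟨ν, hν, hcm⟩ := polyH_lift M v hE h1
    refine ⟨ν, hν, classMass_coarsen hE hR'e hsub ?_⟩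
    exact fun c => (congrFun hcm c).symm
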